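/- arXiv:math/0703830 — 2 statements merged into one kernel-verified Lean document; each statement's English description precedes it below -/
import Mathlib

section
/- Let y : [0,T) → [0,∞) be differentiable and satisfy y'(t) ≤ C₀ h(t) y(t) for all t ∈ [0,T), where h(t) ≥ 0. Suppose sup_{0<t<T} (T−t) h(t) < 1/(2C₀). Then the function z(t) = (T−t) y(t) satisfies z'(t) + ½ y(t) ≤ 0, and consequently ∫_{t₀}^T y(t) dt ≤ 2(T−t₀) y(t₀) for every t₀ ∈ [0,T). -/
open MeasureTheory

/-- if `y ≥ 0` satisfies `y' ≤ C₀ h y` on `[0,T)` with `h ≥ 0` and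
`sup_{0<t<T} (T−t) h(t) < 1/(2C₀)`, then `z(t) = (T−t) y(t)` satisfies
`z'(t) + ½ y(t) ≤ 0`, and consequently `∫_{t₀}^T y ≤ 2 (T−t₀) y(t₀)` for every
`t₀ ∈ [0,T)`. -/
theorem stmt14 (T : ℝ) (hT : 0 < T) (C₀ : ℝ) (hC₀ : 0 < C₀)
    (y y' h : ℝ → ℝ)
    (hy0 : ∀ t ∈ Set.Ico (0 : ℝ) T, 0 ≤ y t)
    (hh0 : ∀ t ∈ Set.Ico (0 : ℝ) T, 0 ≤ h t)
    (hderiv : ∀ t ∈ Set.Ico (0 : ℝ) T, HasDerivAt y (y' t) t)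
    (hineq : ∀ t ∈ Set.Ico (0 : ℝ) T, y' t ≤ C₀ * h t * y t)
    (hsup : ∃ M, M < 1 / (2 * C₀) ∧ ∀ t ∈ Set.Ioo (0 : ℝ) T, (T - t) * h t ≤ M) :
    (∀ t ∈ Set.Ico (0 : ℝ) T,
        HasDerivAt (fun τ => (T - τ) * y τ) ((T - t) * y' t - y t) t
          ∧ ((T - t) * y' t - y t) + (1 / 2) * y t ≤ 0)
      ∧ ∀ t₀ ∈ Set.Ico (0 : ℝ) T, (∫ t in t₀..T, y t) ≤ 2 * (T - t₀) * y t₀ := by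
  obtain ⟨M, hM, hMb⟩ := hsup
  have hM0 : 0 ≤ M := by
    have h2 : (T / 2 : ℝ) ∈ Set.Ioo (0 : ℝ) T := ⟨by linarith, by linarith⟩
    have := hMb (T / 2) h2
    have hh := hh0 (T / 2) ⟨by linarith, by linarith⟩
    nlinarith
  have hCM : C₀ * M < 1 / 2 := by
    have := (mul_lt_mul_of_pos_left hM hC₀)
    rw [mul_one_div, mul_comm] at this
    calc C₀ * M < C₀ / (2 * C₀) := by linarith [this]
    _ = 1 / 2 := by field_simp
  -- the pointwise bound `y' t ≤ C₀ M y t / (T - t)` on the open interval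
  have hbound : ∀ t ∈ Set.Ioo (0 : ℝ) T, y' t ≤ C₀ * M * y t / (T - t) := by
    intro t ht
    have htI : t ∈ Set.Ico (0 : ℝ) T := ⟨ht.1.le, ht.2⟩
    have hTt : (0 : ℝ) < T - t := by linarith [ht.2]
    have h1 := hineq t htI
    have h2 := hMb t ht
    have hy := hy0 t htI
    rw [le_div_iff₀ hTt]
    nlinarith [mul_le_mul_of_nonneg_left h2 (mul_nonneg hC₀.le hy)]
  -- the bound on `y'` at `0` via a limit argument on slopes
  have h00 : (0 : ℝ) ∈ Set.Ico (0 : ℝ) T := ⟨le_rfl, hT⟩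
  have hy'0 : y' 0 ≤ C₀ * M * y 0 / T := by
    have main : ∀ ε > (0 : ℝ), y' 0 ≤ C₀ * M * y 0 / T + ε := by
      intro ε hε
      set K : ℝ := C₀ * M * y 0 / T + ε with hK
      -- continuity of `s ↦ C₀ M y s / (T - s)` at `0`
      have hGc : ContinuousAt (fun s => C₀ * M * y s / (T - s)) 0 := by
        apply ContinuousAt.div
        · exact continuousAt_const.mul (hderiv 0 h00).continuousAt
        · exact continuousAt_const.sub continuousAt_id
        · simpa using (by linarith : T ≠ 0)
      have hG0 : C₀ * M * y 0 / (T - 0) < K := by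
        rw [hK]; simp only [sub_zero]; linarith
      have hev : ∀ᶠ s in nhds (0 : ℝ), C₀ * M * y s / (T - s) < K :=
        hGc.eventually_lt_const hG0
      obtain ⟨δ, hδpos, hδ⟩ := Metric.eventually_nhds_iff.mp hev
      set b : ℝ := min (δ / 2) (T / 2) with hb
      have hb0 : 0 < b := by positivity
      have hbT : b < T := lt_of_le_of_lt (min_le_right _ _) (by linarith)
      have hbδ : b < δ := lt_of_le_of_lt (min_le_left _ _) (by linarith)
      -- `f s = y s - K s` is antitone on `[0, b]`
      have hfd : ∀ s ∈ Set.Ico (0 : ℝ) T, HasDerivAt (fun x => y x - K * x) (y' s - K) s := by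
        intro s hs
        have := (hderiv s hs).sub ((hasDerivAt_id s).const_mul K)
        rw [mul_one] at this
        exact this
      have hanti : AntitoneOn (fun x => y x - K * x) (Set.Icc 0 b) := by
        apply antitoneOn_of_deriv_nonpos (convex_Icc 0 b)
        · intro x hx
          exact ((hfd x ⟨hx.1, lt_of_le_of_lt hx.2 hbT⟩).continuousAt).continuousWithinAt
        · intro x hx
          rw [interior_Icc] at hx
          exact ((hfd x ⟨hx.1.le, hx.2.trans hbT⟩).differentiableAt).differentiableWithinAt
        · intro x hx
          rw [interior_Icc] at hx
          rw [(hfd x ⟨hx.1.le, hx.2.trans hbT⟩).deriv]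
          have hxT : x ∈ Set.Ioo (0 : ℝ) T := ⟨hx.1, hx.2.trans hbT⟩
          have h1 := hbound x hxT
          have h2 : C₀ * M * y x / (T - x) < K := by
            apply hδ
            simp only [Real.dist_eq, sub_zero]
            rw [abs_of_pos hx.1]
            exact hx.2.trans hbδ
          exact sub_nonpos.2 (h1.trans h2.le)
      -- slopes on `(0, b]` are at most `K`
      have hslope : ∀ᶠ t in nhdsWithin (0 : ℝ) (Set.Ioi 0), slope y 0 t ≤ K := by
        filter_upwards [Ioc_mem_nhdsGT hb0] with t ht
        have hft := hanti (Set.left_mem_Icc.2 hb0.le) ⟨ht.1.le, ht.2⟩ ht.1.le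
        simp only at hft
        rw [slope_def_field]
        simp only [sub_zero]
        rw [div_le_iff₀ ht.1]
        nlinarith
      have hs : Filter.Tendsto (slope y 0) (nhdsWithin (0 : ℝ) {(0 : ℝ)}ᶜ)
          (nhds (y' 0)) := hasDerivAt_iff_tendsto_slope.mp (hderiv 0 h00)
      have hs' : Filter.Tendsto (slope y 0) (nhdsWithin (0 : ℝ) (Set.Ioi 0))
          (nhds (y' 0)) :=
        hs.mono_left (nhdsWithin_mono 0 (fun x hx => ne_of_gt hx))
      exact le_of_tendsto hs' hslope
    by_contra hc
    push_neg at hc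
    have := main ((y' 0 - C₀ * M * y 0 / T) / 2) (by linarith)
    linarith
  -- Part 1
  have part1 : ∀ t ∈ Set.Ico (0 : ℝ) T,
      HasDerivAt (fun τ => (T - τ) * y τ) ((T - t) * y' t - y t) t
        ∧ ((T - t) * y' t - y t) + (1 / 2) * y t ≤ 0 := by
    intro t ht
    constructor
    · have h1 : HasDerivAt (fun τ : ℝ => T - τ) (-1) t := by
        simpa using (hasDerivAt_id t).const_sub T
      have := h1.mul (hderiv t ht)
      exact this.congr_deriv (by ring)
    · have hy := hy0 t ht
      rcases eq_or_lt_of_le ht.1 with h0 | h0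
      · -- t = 0
        subst h0
        have : T * y' 0 ≤ C₀ * M * y 0 := by
          rw [le_div_iff₀ hT] at hy'0
          linarith [hy'0]
        nlinarith
      · -- 0 < t
        have hTt : (0 : ℝ) < T - t := by linarith [ht.2]
        have h1 := hbound t ⟨h0, ht.2⟩
        have h2 : (T - t) * y' t ≤ C₀ * M * y t := by
          rw [le_div_iff₀ hTt] at h1
          nlinarith
        nlinarith
  refine ⟨part1, ?_⟩
  -- Part 2
  intro t₀ ht₀
  have hyt₀ := hy0 t₀ ht₀
  have hTt₀ : (0 : ℝ) < T - t₀ := by linarith [ht₀.2]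
  by_cases hint : IntervalIntegrable y volume t₀ T
  · -- the integral bound on compact subintervals
    have claim : ∀ s ∈ Set.Ico t₀ T, (∫ t in t₀..s, y t) ≤ 2 * (T - t₀) * y t₀ := by
      intro s hs
      have hsub : Set.Icc t₀ s ⊆ Set.Ico 0 T :=
        fun x hx => ⟨le_trans ht₀.1 hx.1, lt_of_le_of_lt hx.2 hs.2⟩
      have hyc : ContinuousOn y (Set.Icc t₀ s) :=
        fun x hx => ((hderiv x (hsub hx)).continuousAt).continuousWithinAt
      have key := intervalIntegral.sub_le_integral_of_hasDeriv_right_of_le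
        (g := fun τ => (T - τ) * y τ) (g' := fun τ => (T - τ) * y' τ - y τ)
        (φ := fun τ => -(1 / 2 : ℝ) * y τ) hs.1
        (fun x hx => ((part1 x (hsub hx)).1.continuousAt).continuousWithinAt)
        (fun x hx => ((part1 x (hsub ⟨hx.1.le, hx.2.le⟩)).1).hasDerivWithinAt)
        ((continuousOn_const.mul hyc).integrableOn_Icc)
        (fun x hx => by
          have := (part1 x (hsub ⟨hx.1.le, hx.2.le⟩)).2
          linarith)
      rw [intervalIntegral.integral_const_mul] at key
      have hzs : 0 ≤ (T - s) * y s := by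
        have := hy0 s ⟨le_trans ht₀.1 hs.1, hs.2⟩
        have : (0:ℝ) ≤ T - s := by linarith [hs.2]
        nlinarith [hy0 s ⟨le_trans ht₀.1 hs.1, hs.2⟩]
      nlinarith
    -- pass to the limit `s → T⁻`
    have hcp : ContinuousOn (fun s => ∫ t in t₀..s, y t) (Set.uIcc t₀ T) :=
      intervalIntegral.continuousOn_primitive_interval' hint Set.left_mem_uIcc
    have huIcc : Set.uIcc t₀ T = Set.Icc t₀ T := Set.uIcc_of_le ht₀.2.le
    have hTmem : T ∈ Set.uIcc t₀ T := by rw [huIcc]; exact ⟨ht₀.2.le, le_rfl⟩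
    have htd : Filter.Tendsto (fun s => ∫ t in t₀..s, y t)
        (nhdsWithin T (Set.Iio T)) (nhds (∫ t in t₀..T, y t)) := by
      apply (hcp T hTmem).mono_left
      apply nhdsWithin_le_of_mem
      exact Filter.mem_of_superset (Ico_mem_nhdsLT_of_mem ⟨ht₀.2, le_rfl⟩)
        (by rw [huIcc]; exact Set.Ico_subset_Icc_self)
    have hev : ∀ᶠ s in nhdsWithin T (Set.Iio T),
        (∫ t in t₀..s, y t) ≤ 2 * (T - t₀) * y t₀ := by
      filter_upwards [Ico_mem_nhdsLT_of_mem (Set.mem_Ioc.2 ⟨ht₀.2, le_rfl⟩)] with s hs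
      exact claim s hs
    exact le_of_tendsto htd hev
  · rw [intervalIntegral.integral_undef hint]
    nlinarith
end

section
/- If f̄ : ℝⁿ → ℝⁿ is continuous and ∫_{ℝⁿ} f̄ · φ dy = 0 for every divergence-free vector field φ ∈ C¹_c(ℝⁿ; ℝⁿ), then there exists a scalar function P̄ ∈ C¹ (a distribution) such that f̄ = ∇P̄ (in the distributional sense). -/
set_option maxHeartbeats 1000000
set_option synthInstance.maxHeartbeats 400000

open MeasureTheory Function ContinuousLinearMap intervalIntegral
open scoped RealInnerProductSpace Topology ContDiff Convolution

variable {n : ℕ}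

local notation "E" => EuclideanSpace ℝ (Fin n)

theorem grad_of_symm (F : EuclideanSpace ℝ (Fin n) → EuclideanSpace ℝ (Fin n))
    (hF : ContDiff ℝ 1 F)
    (hsym : ∀ x v w, ⟪fderiv ℝ F x v, w⟫ = ⟪fderiv ℝ F x w, v⟫) (x₀ : EuclideanSpace ℝ (Fin n)) :
    HasFDerivAt (fun x => ∫ t in (0:ℝ)..1, ⟪F (t • x), x⟫) ((innerSL ℝ) (F x₀)) x₀ := by
  have hFd : Differentiable ℝ F := hF.differentiable one_ne_zero
  have hFc : Continuous F := hF.continuous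
  have hF'c : Continuous (fderiv ℝ F) := hF.continuous_fderiv one_ne_zero
  -- the x-derivative of the integrand
  set G' : ℝ → E → (E →L[ℝ] ℝ) := fun t x =>
    t • ((innerSL ℝ x).comp (fderiv ℝ F (t • x))) + innerSL ℝ (F (t • x)) with hG'
  have hdiff : ∀ t : ℝ, ∀ x : E, HasFDerivAt (fun x : E => (⟪F (t • x), x⟫ : ℝ)) (G' t x) x := by
    intro t x
    have h0 : HasFDerivAt (fun x : E => t • x) (t • ContinuousLinearMap.id ℝ E) x :=
      (hasFDerivAt_id x).const_smul t
    have h1 : HasFDerivAt (fun x : E => F (t • x))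
        ((fderiv ℝ F (t • x)).comp (t • ContinuousLinearMap.id ℝ E)) x :=
      (hFd (t • x)).hasFDerivAt.comp x h0
    have h2 : HasFDerivAt (fun x : E => (⟪F (t • x), x⟫ : ℝ)) _ x := h1.inner ℝ (hasFDerivAt_id x)
    refine h2.congr_fderiv (Eq.symm ?_)
    ext v
    simp [hG', fderivInnerCLM_apply, PiLp.inner_apply, RCLike.inner_apply, conj_trivial,
      Finset.mul_sum]
    rw [add_comm]
    congr 1
    exact Finset.sum_congr rfl fun i _ => by ring
  -- continuity of G' in t at fixed x (for measurability)
  have hG'cont : ∀ x : E, Continuous fun t => G' t x := by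
    intro x
    apply Continuous.add
    · exact continuous_id.smul (continuous_const.clm_comp
        (hF'c.comp (continuous_id.smul continuous_const)))
    · exact (innerSL ℝ).continuous.comp (hFc.comp (continuous_id.smul continuous_const))
  -- bounds on a compact set
  obtain ⟨C₁, hC₁⟩ : ∃ C, ∀ y ∈ Metric.closedBall (0:E) (‖x₀‖+1), ‖F y‖ ≤ C :=
    (isCompact_closedBall (0:E) _).exists_bound_of_continuousOn hFc.continuousOn
  obtain ⟨C₂, hC₂⟩ : ∃ C, ∀ y ∈ Metric.closedBall (0:E) (‖x₀‖+1), ‖fderiv ℝ F y‖ ≤ C :=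
    (isCompact_closedBall (0:E) _).exists_bound_of_continuousOn hF'c.continuousOn
  have hmem : ∀ t ∈ Set.uIoc (0:ℝ) 1, ∀ x ∈ Metric.ball x₀ 1,
      t • x ∈ Metric.closedBall (0:E) (‖x₀‖+1) ∧ ‖x‖ ≤ ‖x₀‖ + 1 := by
    intro t ht x hx
    rw [Set.uIoc_of_le zero_le_one] at ht
    have hxn : ‖x‖ ≤ ‖x₀‖ + 1 := by
      have := norm_sub_norm_le x x₀
      have hd : ‖x - x₀‖ < 1 := by simpa [dist_eq_norm] using hx
      linarith
    refine ⟨?_, hxn⟩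
    rw [Metric.mem_closedBall, dist_zero_right, norm_smul]
    have : |t| ≤ 1 := abs_le.2 ⟨by linarith [ht.1], ht.2⟩
    calc ‖t‖ * ‖x‖ ≤ 1 * (‖x₀‖+1) :=
          mul_le_mul (by simpa using this) hxn (norm_nonneg _) zero_le_one
      _ = ‖x₀‖ + 1 := one_mul _
  have hmeas1 : ∀ᶠ x in 𝓝 x₀, AEStronglyMeasurable
      (fun t : ℝ => (⟪F (t • x), x⟫:ℝ)) (volume.restrict (Set.uIoc (0:ℝ) 1)) := by
    filter_upwards with x
    exact (Continuous.inner (hFc.comp (continuous_id.smul continuous_const))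
      continuous_const).aestronglyMeasurable
  have hint1 : IntervalIntegrable (fun t : ℝ => (⟪F (t • x₀), x₀⟫:ℝ)) volume 0 1 :=
    (Continuous.inner (hFc.comp (continuous_id.smul continuous_const))
      continuous_const).intervalIntegrable _ _
  have hmeas2 : AEStronglyMeasurable (fun t : ℝ => G' t x₀)
      (volume.restrict (Set.uIoc (0:ℝ) 1)) := (hG'cont x₀).aestronglyMeasurable
  have hbd : ∀ᵐ t ∂(volume : Measure ℝ), t ∈ Set.uIoc (0:ℝ) 1 → ∀ x ∈ Metric.ball x₀ 1,
      ‖G' t x‖ ≤ 1 * ((‖x₀‖+1) * C₂) + C₁ := by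
    filter_upwards with t ht x hx
    obtain ⟨hmem1, hmem2⟩ := hmem t ht x hx
    have habs : |t| ≤ 1 := by
      rw [Set.uIoc_of_le zero_le_one] at ht
      exact abs_le.2 ⟨by linarith [ht.1], ht.2⟩
    calc ‖G' t x‖ ≤ ‖t • ((innerSL ℝ x).comp (fderiv ℝ F (t • x)))‖ + ‖innerSL ℝ (F (t • x))‖ :=
          norm_add_le _ _
      _ ≤ 1 * ((‖x₀‖+1) * C₂) + C₁ := by
          gcongr ?_ + ?_
          · have hns : ‖t • ((innerSL ℝ x).comp (fderiv ℝ F (t • x)))‖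
                ≤ ‖t‖ * ‖(innerSL ℝ x).comp (fderiv ℝ F (t • x))‖ :=
              ContinuousLinearMap.opNorm_smul_le _ _
            refine hns.trans ?_
            have h1 : ‖(innerSL ℝ x).comp (fderiv ℝ F (t • x))‖ ≤ (‖x₀‖+1) * C₂ := by
              refine le_trans (ContinuousLinearMap.opNorm_comp_le _ _) ?_
              have e1 : ‖innerSL ℝ x‖ = ‖x‖ := innerSL_apply_norm (𝕜 := ℝ) x
              rw [e1]
              exact mul_le_mul hmem2 (hC₂ _ hmem1) (norm_nonneg _) (by positivity)
            exact mul_le_mul (by simpa using habs) h1 (norm_nonneg _) zero_le_one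
          · rw [innerSL_apply_norm]
            exact hC₁ _ hmem1
  have hbint : IntervalIntegrable (fun _ : ℝ => 1 * ((‖x₀‖+1) * C₂) + C₁) volume 0 1 :=
    intervalIntegrable_const
  have hdiff' : ∀ᵐ t ∂(volume : Measure ℝ), t ∈ Set.uIoc (0:ℝ) 1 → ∀ x ∈ Metric.ball x₀ 1,
      HasFDerivAt (fun x : E => (⟪F (t • x), x⟫:ℝ)) (G' t x) x := by
    filter_upwards with t _ x _
    exact hdiff t x
  have key : HasFDerivAt (fun x => ∫ t in (0:ℝ)..1, (⟪F (t • x), x⟫:ℝ))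
      (∫ t in (0:ℝ)..1, G' t x₀) x₀ :=
    intervalIntegral.hasFDerivAt_integral_of_dominated_of_fderiv_le (Metric.ball_mem_nhds x₀ zero_lt_one)
      hmeas1 hint1 hmeas2 hbd hbint hdiff'
  refine key.congr_fderiv (Eq.symm ?_)
  have hG'int : IntervalIntegrable (fun t => G' t x₀) volume 0 1 :=
    (hG'cont x₀).intervalIntegrable _ _
  refine ContinuousLinearMap.ext fun v => ?_
  rw [ContinuousLinearMap.intervalIntegral_apply hG'int v]
  have hu : ∀ t : ℝ, HasDerivAt (fun t => t * (⟪F (t • x₀), v⟫:ℝ)) ((G' t x₀) v) t := by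
    intro t
    have h0 : HasDerivAt (fun t : ℝ => t • x₀) x₀ t := by
      simpa using (hasDerivAt_id t).smul_const x₀
    have hd : HasDerivAt (fun t : ℝ => F (t • x₀)) (fderiv ℝ F (t • x₀) x₀) t :=
      (hFd (t • x₀)).hasFDerivAt.comp_hasDerivAt t h0
    have h1 : HasDerivAt (fun t : ℝ => (⟪F (t • x₀), v⟫:ℝ))
        (⟪fderiv ℝ F (t • x₀) x₀, v⟫:ℝ) t := by
      simpa using hd.inner ℝ (hasDerivAt_const t v)
    have h2 := (hasDerivAt_id t).mul h1
    refine h2.congr_deriv (Eq.symm ?_)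
    have hs : (⟪x₀, fderiv ℝ F (t • x₀) v⟫:ℝ) = ⟪fderiv ℝ F (t • x₀) x₀, v⟫ := by
      rw [real_inner_comm]
      exact hsym _ v x₀
    show (G' t x₀) v = _
    rw [hG']
    simp only [ContinuousLinearMap.add_apply, ContinuousLinearMap.smul_apply,
      ContinuousLinearMap.coe_comp', Function.comp_apply, innerSL_apply_apply, smul_eq_mul, id_eq]
    rw [hs]
    ring
  rw [intervalIntegral.integral_eq_sub_of_hasDerivAt (fun t _ => hu t)
    (((hG'cont x₀).clm_apply continuous_const).intervalIntegrable _ _)]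
  simp [innerSL_apply_apply]

theorem curl_free (f : EuclideanSpace ℝ (Fin n) → EuclideanSpace ℝ (Fin n))
    (hf : Continuous f)
    (h : ∀ φ : EuclideanSpace ℝ (Fin n) → EuclideanSpace ℝ (Fin n),
      ContDiff ℝ 1 φ → HasCompactSupport φ →
      (∀ x, (∑ i, fderiv ℝ φ x (EuclideanSpace.single i 1) i) = 0) →
      ∫ x, ⟪f x, φ x⟫ = 0)
    (ψ : EuclideanSpace ℝ (Fin n) → ℝ) (hψ : ContDiff ℝ ∞ ψ) (hψc : HasCompactSupport ψ)
    (i j : Fin n) :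
    ∫ x, f x i * fderiv ℝ ψ x (EuclideanSpace.single j 1)
      = ∫ x, f x j * fderiv ℝ ψ x (EuclideanSpace.single i 1) := by
  set e : Fin n → E := fun k => EuclideanSpace.single k 1 with he
  have hψ' : ContDiff ℝ ∞ (fderiv ℝ ψ) := hψ.fderiv_right (by norm_num)
  set g : Fin n → E → ℝ := fun k x => fderiv ℝ ψ x (e k) with hg
  have hgc : ∀ k, ContDiff ℝ ∞ (g k) := fun k => hψ'.clm_apply contDiff_const
  set φ : E → E := fun x => g j x • e i - g i x • e j with hφdef
  have hφ : ContDiff ℝ 1 φ :=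
    (((hgc j).smul contDiff_const).sub ((hgc i).smul contDiff_const)).of_le (by norm_num)
  have hsupp : ∀ x, fderiv ℝ ψ x = 0 → φ x = 0 := by
    intro x hx
    simp [hφdef, hg, hx]
  have hφc : HasCompactSupport φ := by
    refine (hψc.fderiv ℝ).mono ?_
    intro x hx
    simp only [mem_support] at hx ⊢
    exact fun h0 => hx (hsupp x h0)
  have hdiv : ∀ x, (∑ k, fderiv ℝ φ x (EuclideanSpace.single k 1) k) = 0 := by
    intro x
    have hgj : HasFDerivAt (fun y => g j y • e i)
        ((fderiv ℝ (g j) x).smulRight (e i)) x :=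
      (((hgc j).differentiable (by norm_num)) x).hasFDerivAt.smul_const (e i)
    have hgi : HasFDerivAt (fun y => g i y • e j)
        ((fderiv ℝ (g i) x).smulRight (e j)) x :=
      (((hgc i).differentiable (by norm_num)) x).hasFDerivAt.smul_const (e j)
    have hd : fderiv ℝ φ x = (fderiv ℝ (g j) x).smulRight (e i)
        - (fderiv ℝ (g i) x).smulRight (e j) := (hgj.sub hgi).fderiv
    have hgd : ∀ k l, fderiv ℝ (g k) x (e l) = fderiv ℝ (fderiv ℝ ψ) x (e l) (e k) := by
      intro k l
      have : fderiv ℝ (g k) x = ((fderiv ℝ (fderiv ℝ ψ) x).flip) (e k) := by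
        have := fderiv_clm_apply (c := fderiv ℝ ψ) (u := fun _ => e k)
          ((hψ'.differentiable (by norm_num)) x) (differentiableAt_const _)
        simpa using this
      rw [this]
      rfl
    have hsym : fderiv ℝ (fderiv ℝ ψ) x (e i) (e j) = fderiv ℝ (fderiv ℝ ψ) x (e j) (e i) :=
      (hψ.contDiffAt.isSymmSndFDerivAt (by simp only [minSmoothness_of_isRCLikeNormedField]; exact WithTop.coe_le_coe.2 (le_top : (2:ℕ∞) ≤ ⊤))) (e i) (e j)
    rw [hd]
    simp only [ContinuousLinearMap.coe_sub', Pi.sub_apply,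
      ContinuousLinearMap.smulRight_apply, PiLp.sub_apply, PiLp.smul_apply, smul_eq_mul]
    rw [Finset.sum_sub_distrib]
    have h1 : ∀ k : Fin n, (fderiv ℝ (g j) x (EuclideanSpace.single k 1)) * e i k
        = (if k = i then fderiv ℝ (g j) x (EuclideanSpace.single k 1) else 0) := by
      intro k; rw [he]; simp [EuclideanSpace.single_apply]
    have h2 : ∀ k : Fin n, (fderiv ℝ (g i) x (EuclideanSpace.single k 1)) * e j k
        = (if k = j then fderiv ℝ (g i) x (EuclideanSpace.single k 1) else 0) := by
      intro k; rw [he]; simp [EuclideanSpace.single_apply]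
    rw [Finset.sum_congr rfl (fun k _ => h1 k), Finset.sum_congr rfl (fun k _ => h2 k),
      Finset.sum_ite_eq' _ i _, Finset.sum_ite_eq' _ j _]
    simp only [Finset.mem_univ, if_true]
    rw [hgd j i, hgd i j, hsym]
    ring
  have key := h φ hφ hφc hdiv
  have hpt : ∀ x, (⟪f x, φ x⟫:ℝ) = f x i * g j x - f x j * g i x := by
    intro x
    simp only [hφdef, PiLp.inner_apply, RCLike.inner_apply, conj_trivial, PiLp.sub_apply,
      PiLp.smul_apply, smul_eq_mul, he, EuclideanSpace.single_apply, mul_ite, mul_one, mul_zero,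
      mul_sub]
    simp only [sub_mul, ite_mul, zero_mul]
    rw [Finset.sum_sub_distrib]
    simp [Finset.sum_ite_eq, mul_comm]
  have hint : ∀ k l : Fin n, Integrable (fun x => f x k * g l x) := by
    intro k l
    apply Continuous.integrable_of_hasCompactSupport
    · exact ((EuclideanSpace.proj (𝕜 := ℝ) k).continuous.comp hf).mul ((hgc l).continuous)
    · refine (hψc.fderiv ℝ).mono ?_
      intro x hx
      simp only [mem_support] at hx ⊢
      intro h0
      exact hx (by simp [hg, h0])
  rw [show (fun x => (⟪f x, φ x⟫:ℝ)) = fun x => f x i * g j x - f x j * g i x from funext hpt,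
    integral_sub (hint i j) (hint j i)] at key
  have : ∫ x, f x i * g j x = ∫ x, f x j * g i x := by linarith [key]
  exact this

-- decomposition in the standard basis
theorem eucl_decomp (v : EuclideanSpace ℝ (Fin n)) :
    ∑ j, v j • EuclideanSpace.single j (1:ℝ) = v := by
  ext k
  rw [WithLp.ofLp_sum, Finset.sum_apply k Finset.univ _]
  simp [EuclideanSpace.single_apply, Finset.sum_ite_eq']

theorem symm_bilin (A : EuclideanSpace ℝ (Fin n) →L[ℝ] EuclideanSpace ℝ (Fin n))
    (hA : ∀ i j, A (EuclideanSpace.single j 1) i = A (EuclideanSpace.single i 1) j)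
    (v w : EuclideanSpace ℝ (Fin n)) : ⟪A v, w⟫ = ⟪A w, v⟫ := by
  have hav : ∀ (u : EuclideanSpace ℝ (Fin n)) (i : Fin n),
      A u i = ∑ j, u j * A (EuclideanSpace.single j 1) i := by
    intro u i
    conv_lhs => rw [← eucl_decomp u]
    rw [map_sum]
    rw [WithLp.ofLp_sum, Finset.sum_apply i Finset.univ _]
    exact Finset.sum_congr rfl fun j _ => by simp
  simp only [PiLp.inner_apply, RCLike.inner_apply, conj_trivial]
  rw [Finset.sum_congr rfl fun i _ => mul_comm (w i) (A v i),
    Finset.sum_congr rfl fun j _ => mul_comm (v j) (A w j)]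
  calc ∑ i, A v i * w i = ∑ i, ∑ j, v j * A (EuclideanSpace.single j 1) i * w i := by
        refine Finset.sum_congr rfl fun i _ => ?_
        rw [hav v i, Finset.sum_mul]
    _ = ∑ j, ∑ i, v j * A (EuclideanSpace.single j 1) i * w i := Finset.sum_comm
    _ = ∑ j, ∑ i, w i * A (EuclideanSpace.single j 1) i * v j := by
        exact Finset.sum_congr rfl fun j _ => Finset.sum_congr rfl fun i _ => by ring
    _ = ∑ j, A w j * v j := by
        refine Finset.sum_congr rfl fun j _ => ?_
        rw [hav w j, Finset.sum_mul]
        exact Finset.sum_congr rfl fun i _ => by rw [hA j i]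

theorem conv_symm (f : EuclideanSpace ℝ (Fin n) → EuclideanSpace ℝ (Fin n))
    (hf : Continuous f)
    (hcurl : ∀ ψ : EuclideanSpace ℝ (Fin n) → ℝ, ContDiff ℝ ∞ ψ → HasCompactSupport ψ →
      ∀ i j : Fin n, ∫ x, f x i * fderiv ℝ ψ x (EuclideanSpace.single j 1)
        = ∫ x, f x j * fderiv ℝ ψ x (EuclideanSpace.single i 1))
    (ρ : ContDiffBump (0 : EuclideanSpace ℝ (Fin n))) :
    ContDiff ℝ 1 (ρ.normed (volume : Measure (EuclideanSpace ℝ (Fin n))) ⋆[lsmul ℝ ℝ, volume] f)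
    ∧ ∀ x v w, ⟪fderiv ℝ (ρ.normed volume ⋆[lsmul ℝ ℝ, volume] f) x v, w⟫
        = ⟪fderiv ℝ (ρ.normed volume ⋆[lsmul ℝ ℝ, volume] f) x w, v⟫ := by
  have hli : LocallyIntegrable f volume := hf.locallyIntegrable
  have hρc : HasCompactSupport (ρ.normed (volume : Measure E)) := ρ.hasCompactSupport_normed
  have hρs : ContDiff ℝ ∞ (ρ.normed (volume : Measure E)) := ρ.contDiff_normed
  set ρn := ρ.normed (volume : Measure E) with hρn
  set F := ρn ⋆[lsmul ℝ ℝ, volume] f with hFdef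
  have hsmooth : ContDiff ℝ 1 F :=
    (hρc.contDiff_convolution_left (lsmul ℝ ℝ) hρs hli).of_le (by norm_num)
  refine ⟨hsmooth, ?_⟩
  -- rewrite with the bump on the right
  have hflip : F = f ⋆[(lsmul ℝ ℝ : ℝ →L[ℝ] E →L[ℝ] E).flip, volume] ρn :=
    (convolution_flip (L := lsmul ℝ ℝ)).symm
  set L' := (lsmul ℝ ℝ : ℝ →L[ℝ] E →L[ℝ] E).flip with hL'
  have hρ'c : HasCompactSupport (fderiv ℝ ρn) := hρc.fderiv ℝ
  have hρ'cont : Continuous (fderiv ℝ ρn) := hρs.continuous_fderiv (by norm_num)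
  -- total derivative of the convolution
  have hderiv : ∀ x : E, fderiv ℝ F x = (f ⋆[L'.precompR E, volume] fderiv ℝ ρn) x := by
    intro x
    rw [hflip]
    exact (hρc.hasFDerivAt_convolution_right L' hli (hρs.of_le (by norm_num)) x).fderiv
  -- its application to a vector, componentwise
  have happ : ∀ (x v : E) (i : Fin n),
      fderiv ℝ F x v i = ∫ t, fderiv ℝ ρn (x - t) v * f t i := by
    intro x v i
    rw [hderiv x]
    rw [convolution_precompR_apply L' hli hρ'c hρ'cont x v]
    have hint : Integrable (fun t => (fderiv ℝ ρn (x - t) v) • f t) volume := by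
      apply Continuous.integrable_of_hasCompactSupport
      · exact ((hρ'cont.comp (continuous_const.sub continuous_id)).clm_apply
          continuous_const).smul hf
      · apply HasCompactSupport.intro
          (hρ'c.image (continuous_const.sub continuous_id) : IsCompact
            ((fun t => x - t) '' tsupport (fderiv ℝ ρn)))
        intro t ht
        have : fderiv ℝ ρn (x - t) = 0 := by
          by_contra h0
          exact ht ⟨x - t, subset_tsupport _ h0, by module⟩
        simp [this]
    have : (f ⋆[L', volume] fun a => fderiv ℝ ρn a v) x
        = ∫ t, (fderiv ℝ ρn (x - t) v) • f t := by
      rw [convolution_def]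
      congr 1
    rw [this]
    calc (∫ t, (fderiv ℝ ρn (x - t)) v • f t) i
        = ∫ t, ((fderiv ℝ ρn (x - t)) v • f t) i :=
          ((EuclideanSpace.proj (𝕜 := ℝ) i).integral_comp_comm hint).symm
      _ = ∫ t, (fderiv ℝ ρn (x - t)) v * f t i := by
          congr 1
  -- symmetry on basis vectors from the distributional curl-free property
  intro x v w
  apply symm_bilin
  intro i j
  set ψ : E → ℝ := fun y => ρn (x - y) with hψdef
  have hψs : ContDiff ℝ ∞ ψ := hρs.comp (contDiff_const.sub contDiff_id)
  have hψc : HasCompactSupport ψ := by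
    apply HasCompactSupport.intro
      (hρc.image (continuous_const.sub continuous_id) : IsCompact
        ((fun t => x - t) '' tsupport ρn))
    intro t ht
    by_contra h0
    exact ht ⟨x - t, subset_tsupport _ h0, by module⟩
  have hψd : ∀ (t : E) (u : E), fderiv ℝ ψ t u = -(fderiv ℝ ρn (x - t) u) := by
    intro t u
    have h1 : HasFDerivAt (fun y : E => x - y) (0 - ContinuousLinearMap.id ℝ E) t :=
      (hasFDerivAt_const x t).sub (hasFDerivAt_id t)
    have h2 : HasFDerivAt ψ ((fderiv ℝ ρn (x - t)).comp (0 - ContinuousLinearMap.id ℝ E)) t :=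
      ((hρs.differentiable (by norm_num)) (x - t)).hasFDerivAt.comp t h1
    rw [h2.fderiv]
    simp
  have hkey := hcurl ψ hψs hψc i j
  have e1 : ∀ (k l : Fin n), (∫ t, f t k * fderiv ℝ ψ t (EuclideanSpace.single l 1))
      = -∫ t, fderiv ℝ ρn (x - t) (EuclideanSpace.single l 1) * f t k := by
    intro k l
    rw [← MeasureTheory.integral_neg]
    congr 1
    ext t
    rw [hψd]
    ring
  rw [e1 i j, e1 j i, neg_inj] at hkey
  rw [happ x _ i, happ x _ j, hkey]

/-- de Rham-type lemma: if `f̄ : ℝⁿ → ℝⁿ` is continuous and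
`∫ f̄ · φ = 0` for every divergence-free `φ ∈ C¹_c(ℝⁿ;ℝⁿ)`, then `f̄ = ∇P̄` for some
scalar function `P̄` (which, `f̄` being continuous, can be taken C¹ with the identity
holding pointwise). -/
theorem stmt19 (n : ℕ) (f : EuclideanSpace ℝ (Fin n) → EuclideanSpace ℝ (Fin n))
    (hf : Continuous f)
    (h : ∀ φ : EuclideanSpace ℝ (Fin n) → EuclideanSpace ℝ (Fin n),
      ContDiff ℝ 1 φ → HasCompactSupport φ →
      (∀ x, (∑ i, fderiv ℝ φ x (EuclideanSpace.single i 1) i) = 0) →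
      ∫ x, ⟪f x, φ x⟫ = 0) :
    ∃ P : EuclideanSpace ℝ (Fin n) → ℝ, ContDiff ℝ 1 P ∧ ∀ x, gradient P x = f x := by
  classical
  have hcurl : ∀ ψ : EuclideanSpace ℝ (Fin n) → ℝ, ContDiff ℝ ∞ ψ → HasCompactSupport ψ →
      ∀ i j : Fin n, ∫ x, f x i * fderiv ℝ ψ x (EuclideanSpace.single j 1)
        = ∫ x, f x j * fderiv ℝ ψ x (EuclideanSpace.single i 1) :=
    fun ψ h1 h2 i j => curl_free f hf h ψ h1 h2 i j
  set ρ : ℕ → ContDiffBump (0 : EuclideanSpace ℝ (Fin n)) := fun k =>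
    ⟨((k:ℝ)+1)⁻¹/2, ((k:ℝ)+1)⁻¹, by positivity, by
      have h0 : (0:ℝ) < ((k:ℝ)+1)⁻¹ := by positivity
      linarith⟩ with hρdef
  set Fk : ℕ → EuclideanSpace ℝ (Fin n) → EuclideanSpace ℝ (Fin n) := fun k =>
    (ρ k).normed (volume : Measure (EuclideanSpace ℝ (Fin n)))
      ⋆[ContinuousLinearMap.lsmul ℝ ℝ, volume] f with hFkdef
  have hconv := fun k => conv_symm f hf hcurl (ρ k)
  have hrOut : ∀ k, (ρ k).rOut = ((k:ℝ)+1)⁻¹ := fun k => rfl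
  -- locally uniform convergence of the mollifications
  have hlocunif : TendstoLocallyUniformly Fk f Filter.atTop := by
    rw [tendstoLocallyUniformly_iff_forall_isCompact]
    intro K hK
    rw [Metric.tendstoUniformlyOn_iff]
    intro ε hε
    have hK1 : IsCompact (Metric.cthickening 1 K) := hK.cthickening
    have hucont := hK1.uniformContinuousOn_of_continuous hf.continuousOn
    rw [Metric.uniformContinuousOn_iff] at hucont
    obtain ⟨δ, hδ, hδ'⟩ := hucont (ε/2) (by linarith)
    obtain ⟨N, hN⟩ : ∃ N : ℕ, ((N:ℝ)+1)⁻¹ < min δ 1 := by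
      obtain ⟨N, hN⟩ := exists_nat_gt (min δ 1)⁻¹
      refine ⟨N, ?_⟩
      have hmin : (0:ℝ) < min δ 1 := lt_min hδ zero_lt_one
      rw [inv_lt_comm₀ (by positivity) hmin]
      calc (min δ 1)⁻¹ < N := hN
        _ ≤ (N:ℝ) + 1 := by linarith
    filter_upwards [Filter.eventually_ge_atTop N] with k hk x hx
    have hout : (ρ k).rOut < min δ 1 := by
      rw [hrOut]
      refine lt_of_le_of_lt ?_ hN
      have hcast : (N:ℝ) ≤ (k:ℝ) := by exact_mod_cast hk
      gcongr
    have hb : ∀ y ∈ Metric.ball x (ρ k).rOut, dist (f y) (f x) ≤ ε/2 := by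
      intro y hy
      have hyx : dist y x < min δ 1 := lt_trans (Metric.mem_ball.1 hy) hout
      have hyK1 : y ∈ Metric.cthickening 1 K :=
        Metric.mem_cthickening_of_dist_le y x 1 K hx
          (le_trans hyx.le (min_le_right _ _))
      have hxK1 : x ∈ Metric.cthickening 1 K :=
        Metric.self_subset_cthickening K hx
      exact (hδ' y hyK1 x hxK1 (lt_of_lt_of_le hyx (min_le_left _ _))).le
    have hd := ContDiffBump.dist_normed_convolution_le (φ := ρ k) (μ := volume)
      hf.aestronglyMeasurable hb
    calc dist (f x) (Fk k x) = dist (Fk k x) (f x) := dist_comm _ _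
      _ ≤ ε/2 := hd
      _ < ε := by linarith
  have hiso : ∀ a b : EuclideanSpace ℝ (Fin n),
      dist (innerSL ℝ a) (innerSL ℝ b) = dist a b := by
    intro a b
    rw [dist_eq_norm, dist_eq_norm, ← map_sub, innerSL_apply_norm (𝕜 := ℝ)]
  have hlocunif' : TendstoLocallyUniformly (fun k x => innerSL ℝ (Fk k x))
      (fun x => innerSL ℝ (f x)) Filter.atTop := by
    rw [tendstoLocallyUniformly_iff_forall_isCompact] at hlocunif ⊢
    intro K hK
    have h1 := hlocunif K hK
    rw [Metric.tendstoUniformlyOn_iff] at h1 ⊢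
    intro ε hε
    filter_upwards [h1 ε hε] with k hk x hx
    rw [hiso]
    exact hk x hx
  set P : EuclideanSpace ℝ (Fin n) → ℝ :=
    fun x => ∫ t in (0:ℝ)..1, ⟪f (t • x), x⟫ with hPdef
  set Qk : ℕ → EuclideanSpace ℝ (Fin n) → ℝ :=
    fun k x => ∫ t in (0:ℝ)..1, ⟪Fk k (t • x), x⟫ with hQkdef
  have hFkcont : ∀ k, Continuous (Fk k) := fun k => (hconv k).1.continuous
  have hQconv : ∀ x, Filter.Tendsto (fun k => Qk k x) Filter.atTop (nhds (P x)) := by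
    intro x
    rw [Metric.tendsto_atTop]
    intro ε hε
    have hKc : IsCompact (Metric.closedBall (0 : EuclideanSpace ℝ (Fin n)) ‖x‖) :=
      isCompact_closedBall _ _
    have h1 := (tendstoLocallyUniformly_iff_forall_isCompact.1 hlocunif) _ hKc
    rw [Metric.tendstoUniformlyOn_iff] at h1
    have hε' : 0 < ε / (‖x‖ + 1) := by positivity
    obtain ⟨N, hN⟩ := Filter.eventually_atTop.1 (h1 _ hε')
    refine ⟨N, fun k hk => ?_⟩
    have hi1 : IntervalIntegrable (fun t : ℝ => (⟪Fk k (t • x), x⟫:ℝ)) volume 0 1 :=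
      (Continuous.inner ((hFkcont k).comp (continuous_id.smul continuous_const))
        continuous_const).intervalIntegrable _ _
    have hi2 : IntervalIntegrable (fun t : ℝ => (⟪f (t • x), x⟫:ℝ)) volume 0 1 :=
      (Continuous.inner (hf.comp (continuous_id.smul continuous_const))
        continuous_const).intervalIntegrable _ _
    have hsub : Qk k x - P x
        = ∫ t in (0:ℝ)..1, (⟪Fk k (t • x), x⟫ - ⟪f (t • x), x⟫ : ℝ) := by
      rw [intervalIntegral.integral_sub hi1 hi2]
    have hbd : ∀ t ∈ Set.uIoc (0:ℝ) 1,
        ‖(⟪Fk k (t • x), x⟫ - ⟪f (t • x), x⟫ : ℝ)‖ ≤ (ε / (‖x‖ + 1)) * ‖x‖ := by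
      intro t ht
      rw [Set.uIoc_of_le zero_le_one] at ht
      have habs : |t| ≤ 1 := abs_le.2 ⟨by linarith [ht.1], ht.2⟩
      have hmem : t • x ∈ Metric.closedBall (0 : EuclideanSpace ℝ (Fin n)) ‖x‖ := by
        rw [Metric.mem_closedBall, dist_zero_right, norm_smul]
        calc ‖t‖ * ‖x‖ ≤ 1 * ‖x‖ :=
              mul_le_mul_of_nonneg_right (by simpa using habs) (norm_nonneg _)
          _ = ‖x‖ := one_mul _
      have hdist : ‖Fk k (t • x) - f (t • x)‖ ≤ ε / (‖x‖ + 1) := by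
        have := hN k hk (t • x) hmem
        rw [dist_comm, dist_eq_norm] at this
        exact this.le
      calc ‖(⟪Fk k (t • x), x⟫ - ⟪f (t • x), x⟫ : ℝ)‖
          = |(⟪Fk k (t • x) - f (t • x), x⟫ : ℝ)| := by rw [inner_sub_left]; rfl
        _ ≤ ‖Fk k (t • x) - f (t • x)‖ * ‖x‖ := abs_real_inner_le_norm _ _
        _ ≤ (ε / (‖x‖ + 1)) * ‖x‖ :=
            mul_le_mul_of_nonneg_right hdist (norm_nonneg _)
    have hnorm : ‖Qk k x - P x‖ ≤ (ε / (‖x‖ + 1)) * ‖x‖ * |1 - 0| := by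
      rw [hsub]
      exact intervalIntegral.norm_integral_le_of_norm_le_const hbd
    rw [dist_eq_norm]
    refine lt_of_le_of_lt hnorm ?_
    have hx1 : (0:ℝ) < ‖x‖ + 1 := by positivity
    rw [show |(1:ℝ) - 0| = 1 by norm_num, mul_one, div_mul_eq_mul_div, div_lt_iff₀ hx1]
    nlinarith [norm_nonneg x]
  have hderivP : ∀ x, HasFDerivAt P (innerSL ℝ (f x)) x := by
    intro x
    exact hasFDerivAt_of_tendstoLocallyUniformlyOn isOpen_univ
      hlocunif'.tendstoLocallyUniformlyOn
      (fun k y _ => grad_of_symm (Fk k) (hconv k).1 (hconv k).2 y)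
      (fun y _ => hQconv y) (Set.mem_univ x)
  have hgrad : ∀ x, HasGradientAt P (f x) x := by
    intro x
    rw [hasGradientAt_iff_hasFDerivAt]
    have he : (InnerProductSpace.toDual ℝ (EuclideanSpace ℝ (Fin n)) (f x)
        : EuclideanSpace ℝ (Fin n) →L[ℝ] ℝ) = innerSL ℝ (f x) := by
      ext v
      simp [InnerProductSpace.toDual_apply_apply]
    rw [he]
    exact hderivP x
  refine ⟨P, ?_, fun x => (hgrad x).gradient⟩
  rw [contDiff_one_iff_fderiv]
  refine ⟨fun x => (hderivP x).differentiableAt, ?_⟩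
  have he2 : (fderiv ℝ P) = fun x => innerSL ℝ (f x) := funext fun x => (hderivP x).fderiv
  rw [he2]
  exact (innerSL ℝ).continuous.comp hf
end
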